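/- Fix an even integer n ≥ 4. Let C_n := [cos((i−j)π/n)]_{0≤i,j≤n−1} and C_{n,ε} := C_n + ε I_n. Then there exists ε_0 > 0 such that for every 0 < ε < ε_0 there exists δ > 0 with the property: for every even integer k with 2 ≤ k ≤ n−2 and every real α ∈ [k−δ, k+δ], the matrix |C_{n,ε}|_∘^{∘α} := [|(C_{n,ε})_{ij}|^α] is positive semi-definite. -/

import Mathlib

/-- The `α`th entrywise absolute power `[|a_ij|^α]` of a real matrix, using the real
power function `Real.rpow` (so that `0 ^ 0 = 1`). -/
noncomputable def absHadamardPower {n : ℕ} (A : Matrix (Fin n) (Fin n) ℝ) (α : ℝ) :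
    Matrix (Fin n) (Fin n) ℝ :=
  Matrix.of fun i j => |A i j| ^ α

/-- Binomial expansion of a rank-two Gram-type double sum. -/
lemma sum_binom_sq {n : ℕ} (u v x : Fin n → ℝ) (k : ℕ) :
    ∑ i : Fin n, ∑ j : Fin n, x i * ((u i * u j + v i * v j) ^ k * x j)
      = ∑ r ∈ Finset.range (k + 1),
          (k.choose r : ℝ) * (∑ i : Fin n, x i * (u i ^ r * v i ^ (k - r))) ^ 2 := by
  have h1 : ∀ i j : Fin n, x i * ((u i * u j + v i * v j) ^ k * x j)
      = ∑ r ∈ Finset.range (k + 1),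
          (k.choose r : ℝ) *
            ((x i * (u i ^ r * v i ^ (k - r))) * (x j * (u j ^ r * v j ^ (k - r)))) := by
    intro i j
    rw [add_pow, Finset.sum_mul, Finset.mul_sum]
    refine Finset.sum_congr rfl fun r _ => ?_
    rw [mul_pow, mul_pow]
    ring
  calc ∑ i : Fin n, ∑ j : Fin n, x i * ((u i * u j + v i * v j) ^ k * x j)
      = ∑ i : Fin n, ∑ r ∈ Finset.range (k + 1), ∑ j : Fin n,
          (k.choose r : ℝ) *
            ((x i * (u i ^ r * v i ^ (k - r))) * (x j * (u j ^ r * v j ^ (k - r)))) := by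
        refine Finset.sum_congr rfl fun i _ => ?_
        simp only [h1]
        exact Finset.sum_comm
    _ = ∑ r ∈ Finset.range (k + 1), ∑ i : Fin n, ∑ j : Fin n,
          (k.choose r : ℝ) *
            ((x i * (u i ^ r * v i ^ (k - r))) * (x j * (u j ^ r * v j ^ (k - r)))) :=
        Finset.sum_comm
    _ = ∑ r ∈ Finset.range (k + 1),
          (k.choose r : ℝ) * (∑ i : Fin n, x i * (u i ^ r * v i ^ (k - r))) ^ 2 := by
        refine Finset.sum_congr rfl fun r _ => ?_
        rw [sq, Finset.sum_mul_sum, Finset.mul_sum]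
        simp [Finset.mul_sum]

/-- For even `n ≥ 4` and `C_{n,ε} = [cos((i-j)π/n)] + ε I_n` with `ε > 0` small
enough, there is `δ > 0` such that for every even integer `k` with `2 ≤ k ≤ n-2` and
every `α ∈ [k-δ, k+δ]`, the matrix `[|(C_{n,ε})_{ij}|^α]` is positive semi-definite. -/
theorem abs_hadamard_power_cos_psd_near_even_integers (n : ℕ) (hn : 4 ≤ n)
    (hne : Even n) :
    ∃ ε₀ > (0 : ℝ), ∀ ε : ℝ, 0 < ε → ε < ε₀ →
      ∃ δ > (0 : ℝ), ∀ k : ℕ, Even k → 2 ≤ k → k + 2 ≤ n →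
        ∀ α : ℝ, (k : ℝ) - δ ≤ α → α ≤ (k : ℝ) + δ →
          (absHadamardPower
            (Matrix.of fun i j : Fin n =>
              Real.cos (((i : ℝ) - (j : ℝ)) * Real.pi / (n : ℝ)) +
                (if i = j then ε else 0))
            α).PosSemidef := by
  refine ⟨1, one_pos, fun ε hε hε1 => ?_⟩
  set A : Matrix (Fin n) (Fin n) ℝ := Matrix.of fun i j : Fin n =>
      Real.cos (((i : ℝ) - (j : ℝ)) * Real.pi / (n : ℝ)) + (if i = j then ε else 0) with hA
  have hAapp : ∀ i j : Fin n, A i j =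
      Real.cos (((i : ℝ) - (j : ℝ)) * Real.pi / (n : ℝ)) + (if i = j then ε else 0) := by
    intro i j; rw [hA]; rfl
  have hAsymm : ∀ i j : Fin n, A j i = A i j := by
    intro i j
    rw [hAapp, hAapp]
    have : ((j : ℝ) - (i : ℝ)) * Real.pi / (n : ℝ)
        = -(((i : ℝ) - (j : ℝ)) * Real.pi / (n : ℝ)) := by ring
    rw [this, Real.cos_neg]
    congr 1
    simp [eq_comm]
  -- the per-k δ obtained from continuity of the entrywise power in the exponent
  have key : ∀ k : ℕ, ∃ δ : ℝ, 0 < δ ∧ (1 ≤ k → ∀ α : ℝ, |α - (k : ℝ)| ≤ δ →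
      (∑ i : Fin n, ∑ j : Fin n, abs (|A i j| ^ α - |A i j| ^ (k : ℝ))) ≤ 2 * ε) := by
    intro k
    by_cases hk : 1 ≤ k
    · set S : ℝ → ℝ := fun α => ∑ i : Fin n, ∑ j : Fin n,
          abs (|A i j| ^ α - |A i j| ^ (k : ℝ)) with hS
      have hcont : ContinuousAt S (k : ℝ) := by
        apply tendsto_finset_sum
        intro i _
        apply tendsto_finset_sum
        intro j _
        have h1 : ContinuousAt (fun α : ℝ => |A i j| ^ α) (k : ℝ) :=
          Real.continuousAt_const_rpow' (by positivity)
        exact ((h1.sub continuousAt_const).abs)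
      have hSk : S (k : ℝ) = 0 := by
        simp [hS]
      obtain ⟨δ0, hδ0, hball⟩ := Metric.continuousAt_iff.mp hcont (2 * ε) (by positivity)
      refine ⟨δ0 / 2, by positivity, fun _ α hα => ?_⟩
      have hd : dist α (k : ℝ) < δ0 := by
        rw [Real.dist_eq]
        linarith
      have := hball hd
      rw [hSk, Real.dist_eq, sub_zero] at this
      have hS0 : 0 ≤ S α := by
        apply Finset.sum_nonneg; intro i _
        apply Finset.sum_nonneg; intro j _
        exact abs_nonneg _
      rw [abs_of_nonneg hS0] at this
      exact le_of_lt this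
    · exact ⟨1, one_pos, fun h => absurd h hk⟩
  choose f hfpos hf using key
  set K : Finset ℕ := Finset.range (n + 1) with hK
  have hKne : K.Nonempty := ⟨0, by simp [hK]⟩
  refine ⟨K.inf' hKne f, (Finset.lt_inf'_iff hKne).mpr fun k _ => hfpos k, ?_⟩
  set δ := K.inf' hKne f with hδ
  intro k hkeven hk2 hkn α hα1 hα2
  have hkK : k ∈ K := by
    simp only [hK, Finset.mem_range]
    omega
  have hδk : δ ≤ f k := Finset.inf'_le _ hkK
  have hαk : |α - (k : ℝ)| ≤ f k := by
    rw [abs_le]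
    constructor <;> linarith
  have hSbound := hf k (by omega) α hαk
  -- abbreviations
  set M := absHadamardPower A α with hM
  have hMapp : ∀ i j : Fin n, M i j = |A i j| ^ α := fun i j => rfl
  constructor
  · -- Hermitian
    ext i j
    simp only [Matrix.conjTranspose_apply, RCLike.star_def, Matrix.conjTranspose]
    show star (M j i) = M i j
    rw [star_trivial, hMapp, hMapp, hAsymm]
  · intro x
    -- the quadratic form
    have hQ : (x.sum fun i xi => x.sum fun j xj => star xi * M i j * xj)
        = ∑ i : Fin n, ∑ j : Fin n, x i * (M i j * x j) := by
      simp only [star_trivial]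
      rw [Finsupp.sum_fintype _ _ (by simp)]
      refine Finset.sum_congr rfl fun i _ => ?_
      rw [Finsupp.sum_fintype _ _ (by simp)]
      refine Finset.sum_congr rfl fun j _ => ?_
      ring
    rw [hQ]
    -- u, v
    set u : Fin n → ℝ := fun i => Real.cos ((i : ℝ) * Real.pi / (n : ℝ)) with hu
    set v : Fin n → ℝ := fun i => Real.sin ((i : ℝ) * Real.pi / (n : ℝ)) with hv
    have hnpos : (0 : ℝ) < (n : ℝ) := by positivity
    -- entries at the even integer exponent k
    have hMk : ∀ i j : Fin n, |A i j| ^ (k : ℝ)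
        = (u i * u j + v i * v j) ^ k + (if i = j then ((1 + ε) ^ k - 1) else 0) := by
      intro i j
      rw [Real.rpow_natCast, hkeven.pow_abs]
      by_cases hij : i = j
      · subst hij
        have h1 : A i i = 1 + ε := by
          rw [hAapp]
          simp
        have h2 : u i * u i + v i * v i = 1 := by
          rw [hu, hv]
          have := Real.sin_sq_add_cos_sq ((i : ℝ) * Real.pi / (n : ℝ))
          nlinarith
        rw [h1, h2]
        simp
      · have h1 : A i j = u i * u j + v i * v j := by
          rw [hAapp, hu, hv, if_neg hij, add_zero]
          have harg : ((i : ℝ) - (j : ℝ)) * Real.pi / (n : ℝ)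
              = (i : ℝ) * Real.pi / (n : ℝ) - (j : ℝ) * Real.pi / (n : ℝ) := by ring
          rw [harg, Real.cos_sub]
        rw [h1, if_neg hij, add_zero]
    -- the quadratic form at exponent k is bounded below by 2ε‖x‖²
    have hQk : (2 * ε) * ∑ l : Fin n, x l ^ 2
        ≤ ∑ i : Fin n, ∑ j : Fin n, x i * (|A i j| ^ (k : ℝ) * x j) := by
      have expand : ∑ i : Fin n, ∑ j : Fin n, x i * (|A i j| ^ (k : ℝ) * x j)
          = (∑ i : Fin n, ∑ j : Fin n, x i * ((u i * u j + v i * v j) ^ k * x j))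
            + ((1 + ε) ^ k - 1) * ∑ l : Fin n, x l ^ 2 := by
        simp only [hMk]
        rw [Finset.mul_sum, ← Finset.sum_add_distrib]
        refine Finset.sum_congr rfl fun i _ => ?_
        have : ((1 + ε) ^ k - 1) * x i ^ 2
            = ∑ j : Fin n, x i * ((if i = j then ((1 + ε) ^ k - 1) else 0) * x j) := by
          rw [Finset.sum_eq_single i]
          · simp; ring
          · intro b _ hb
            simp [Ne.symm hb]
          · intro h
            exact absurd (Finset.mem_univ i) h
        rw [this, ← Finset.sum_add_distrib]
        refine Finset.sum_congr rfl fun j _ => ?_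
        ring
      rw [expand, sum_binom_sq u v x k]
      have hbinom : (0 : ℝ) ≤ ∑ r ∈ Finset.range (k + 1),
          (k.choose r : ℝ) * (∑ i : Fin n, x i * (u i ^ r * v i ^ (k - r))) ^ 2 := by
        apply Finset.sum_nonneg
        intro r _
        positivity
      have hpow : 1 + (k : ℝ) * ε ≤ (1 + ε) ^ k := one_add_mul_le_pow (by linarith) k
      have hk2' : (2 : ℝ) ≤ (k : ℝ) := by exact_mod_cast hk2
      have hsum : 0 ≤ ∑ l : Fin n, x l ^ 2 := by positivity
      nlinarith [mul_le_mul_of_nonneg_right (show 2 * ε ≤ (1 + ε) ^ k - 1 by nlinarith)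
        hsum]
    -- deviation bound
    have hsq : ∀ i j : Fin n, |x i| * |x j| ≤ ∑ l : Fin n, x l ^ 2 := by
      intro i j
      have h1 : x i ^ 2 ≤ ∑ l : Fin n, x l ^ 2 :=
        Finset.single_le_sum (fun l _ => sq_nonneg (x l)) (Finset.mem_univ i)
      have h2 : x j ^ 2 ≤ ∑ l : Fin n, x l ^ 2 :=
        Finset.single_le_sum (fun l _ => sq_nonneg (x l)) (Finset.mem_univ j)
      nlinarith [sq_nonneg (|x i| - |x j|), sq_abs (x i), sq_abs (x j)]
    have hdev : |∑ i : Fin n, ∑ j : Fin n, x i * (M i j * x j)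
        - ∑ i : Fin n, ∑ j : Fin n, x i * (|A i j| ^ (k : ℝ) * x j)|
        ≤ (2 * ε) * ∑ l : Fin n, x l ^ 2 := by
      rw [← Finset.sum_sub_distrib]
      calc |∑ i : Fin n, (∑ j : Fin n, x i * (M i j * x j)
              - ∑ j : Fin n, x i * (|A i j| ^ (k : ℝ) * x j))|
          ≤ ∑ i : Fin n, |∑ j : Fin n, x i * (M i j * x j)
              - ∑ j : Fin n, x i * (|A i j| ^ (k : ℝ) * x j)| :=
            Finset.abs_sum_le_sum_abs _ _
        _ ≤ ∑ i : Fin n, ∑ j : Fin n,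
              abs (|A i j| ^ α - |A i j| ^ (k : ℝ)) * (∑ l : Fin n, x l ^ 2) := by
            refine Finset.sum_le_sum fun i _ => ?_
            rw [← Finset.sum_sub_distrib]
            refine le_trans (Finset.abs_sum_le_sum_abs _ _) (Finset.sum_le_sum fun j _ => ?_)
            have : x i * (M i j * x j) - x i * (|A i j| ^ (k : ℝ) * x j)
                = (|A i j| ^ α - |A i j| ^ (k : ℝ)) * (x i * x j) := by
              rw [hMapp]; ring
            rw [this, abs_mul, abs_mul]
            exact mul_le_mul_of_nonneg_left (hsq i j) (abs_nonneg _)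
        _ ≤ (2 * ε) * ∑ l : Fin n, x l ^ 2 := by
            simp only [← Finset.sum_mul]
            have hsum : 0 ≤ ∑ l : Fin n, x l ^ 2 := by positivity
            exact mul_le_mul_of_nonneg_right hSbound hsum
    have := abs_le.mp hdev
    linarith [hQk, this.1]
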